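/- Let H be a modular hyperplane of a matroid M with complementary cocircuit C* = E(M)−H. Then cl(C*) ∩ H is a round set of M. -/

import Mathlib

open Set

namespace Matroid

variable {α : Type*} {β : Type*}

/-- The rank of a set in a matroid: the supremum of sizes of independent subsets. -/
noncomputable def mRank (M : Matroid α) (X : Set α) : ℕ :=
  sSup {n : ℕ | ∃ I, M.Indep I ∧ I ⊆ X ∧ I.ncard = n}

/-- The rank of a matroid. -/
noncomputable def mRk (M : Matroid α) : ℕ := M.mRank M.E

/-- A flat `F` is modular if `r F + r F' = r (F ∪ F') + r (F ∩ F')` for every flat `F'`. -/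
def IsModularFlat (M : Matroid α) (F : Set α) : Prop :=
  M.IsFlat F ∧ ∀ F', M.IsFlat F' →
    M.mRank F + M.mRank F' = M.mRank (F ∪ F') + M.mRank (F ∩ F')

/-- A proper flat is a flat other than the ground set. -/
def IsProperFlat (M : Matroid α) (F : Set α) : Prop := M.IsFlat F ∧ F ≠ M.E

/-- A vertical cover is a pair of proper flats whose union is the ground set. -/
def VerticalCover (M : Matroid α) (F F' : Set α) : Prop :=
  M.IsProperFlat F ∧ M.IsProperFlat F' ∧ F ∪ F' = M.E

/-- A modular cover is a vertical cover by two modular flats. -/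
def ModularCover (M : Matroid α) (F F' : Set α) : Prop :=
  M.VerticalCover F F' ∧ M.IsModularFlat F ∧ M.IsModularFlat F'

/-- A matroid is round if it has no vertical cover. -/
def Round (M : Matroid α) : Prop := ∀ F F', ¬ M.VerticalCover F F'

/-- A subset of the ground set is round if the restriction to it is round. -/
def RoundSet (M : Matroid α) (X : Set α) : Prop := X ⊆ M.E ∧ (M ↾ X).Round

/-- A rotunda is a maximal round flat. -/
def Rotunda (M : Matroid α) (R : Set α) : Prop :=
  M.IsFlat R ∧ M.RoundSet R ∧ ∀ R', M.IsFlat R' → M.RoundSet R' → R ⊆ R' → R' = R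

/-- A matroid of rank `r` is supersolvable if there is a chain of modular flats
`F 0 ⊆ F 1 ⊆ ⋯ ⊆ F r` with `r (F i) = i` for each `i`. -/
def Supersolvable (M : Matroid α) : Prop :=
  ∃ F : ℕ → Set α, (∀ i ≤ M.mRk, M.IsModularFlat (F i) ∧ M.mRank (F i) = i) ∧
    ∀ i < M.mRk, F i ⊆ F (i + 1)

/-- A matroid is saturated if every round flat is modular. -/
def Saturated (M : Matroid α) : Prop :=
  ∀ F, M.IsFlat F → M.RoundSet F → M.IsModularFlat F

/-- A circuit: a minimal dependent subset of the ground set. -/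
def Circ (M : Matroid α) (C : Set α) : Prop :=
  C ⊆ M.E ∧ ¬ M.Indep C ∧ ∀ D ⊂ C, M.Indep D

/-- A matroid is connected if it is non-empty and every two distinct elements lie in a
common circuit. -/
def ConnectedM (M : Matroid α) : Prop :=
  M.E.Nonempty ∧ ∀ x ∈ M.E, ∀ y ∈ M.E, x = y ∨ ∃ C, M.Circ C ∧ x ∈ C ∧ y ∈ C

/-- A hyperplane: a flat of rank `r M - 1`. -/
def IsHyperplane (M : Matroid α) (H : Set α) : Prop :=
  M.IsFlat H ∧ M.mRank H + 1 = M.mRk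

/-- The union of the projections `P_H(x, y) = H ∩ cl (x ∪ y)` onto the modular hyperplane `H`,
taken over all pairs of distinct rank-one flats `x = cl {a}`, `y = cl {b}` spanned by
elements `a, b` of `X`. -/
def projUnion (M : Matroid α) (H X : Set α) : Set α :=
  ⋃ a ∈ X, ⋃ b ∈ X, ⋃ (_ : M.closure {a} ≠ M.closure {b}), H ∩ M.closure {a, b}

/-- Two elements are related if they are equal or lie in a common circuit; the connected
components of a matroid are the restrictions to the equivalence classes of this relation. -/
def connRel (M : Matroid α) (x y : α) : Prop :=
  x = y ∨ ∃ C, M.Circ C ∧ x ∈ C ∧ y ∈ C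

/-- The rotunda graph of a matroid: vertices are the rotunda; two rotunda are adjacent if
they intersect and there is a modular cover separating them at their intersection. -/
def rotundaGraph (M : Matroid α) : SimpleGraph {R : Set α // M.Rotunda R} where
  Adj R₁ R₂ := R₁ ≠ R₂ ∧ (R₁.1 ∩ R₂.1).Nonempty ∧
    ∃ F₁ F₂, M.ModularCover F₁ F₂ ∧ R₁.1 ⊆ F₁ ∧ R₂.1 ⊆ F₂ ∧ F₁ ∩ F₂ = R₁.1 ∩ R₂.1
  symm := ⟨by
    rintro a b ⟨hne, hint, F₁, F₂, ⟨⟨hp1, hp2, hu⟩, hm1, hm2⟩, h1, h2, hi⟩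
    refine ⟨hne.symm, by rwa [Set.inter_comm], F₂, F₁,
      ⟨⟨hp2, hp1, by rwa [Set.union_comm]⟩, hm2, hm1⟩, h2, h1, ?_⟩
    rw [Set.inter_comm, hi, Set.inter_comm]⟩
  loopless := ⟨fun a h => h.1 rfl⟩

/-- A rotunda tree of `M`: a tree on the rotunda of `M` such that for each element `x` of the
ground set, the rotunda containing `x` induce a (nonempty) subtree. -/
def IsRotundaTree (M : Matroid α) (T : SimpleGraph {R : Set α // M.Rotunda R}) : Prop :=
  T.IsTree ∧ ∀ x ∈ M.E, (T.induce {t : {R : Set α // M.Rotunda R} | x ∈ t.1}).Connected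

/-- A legitimate weighting of `M`: zero on the empty set, and strictly monotone under proper
inclusion on the set consisting of `∅` and the pairwise intersections of distinct rotunda. -/
def LegitimateWeighting (M : Matroid α) (σ : Set α → ℕ) : Prop :=
  σ ∅ = 0 ∧
  ∀ X X' : Set α,
    (X = ∅ ∨ ∃ R R', M.Rotunda R ∧ M.Rotunda R' ∧ R ≠ R' ∧ X = R ∩ R') →
    (X' = ∅ ∨ ∃ R R', M.Rotunda R ∧ M.Rotunda R' ∧ R ≠ R' ∧ X' = R ∩ R') →
    X ⊂ X' → σ X < σ X'

/-- The total weight of a graph on the rotunda of `M`, where the edge joining rotunda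
`R` and `R'` gets weight `σ (R ∩ R')`. -/
noncomputable def treeWeight {M : Matroid α} (σ : Set α → ℕ)
    (T : SimpleGraph {R : Set α // M.Rotunda R}) : ℕ :=
  ∑ᶠ e ∈ T.edgeSet,
    Sym2.lift ⟨fun a b => σ (a.1 ∩ b.1), fun a b => by simp [Set.inter_comm]⟩ e

/-- A tree-decomposition of a matroid: a tree together with bags covering the ground set. -/
def IsTreeDecomp (M : Matroid α) (T : SimpleGraph β) (τ : β → Set α) : Prop :=
  T.IsTree ∧ ∀ x ∈ M.E, ∃ t, x ∈ τ t

/-- The node-width of a node `t` in a tree-decomposition `(T, τ)` of `M`: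
`(Σ_i r (τ t ∪ ⋃_{k ≠ i} F_k)) − (d − 1) · r M`, where `F_1, …, F_d` are the unions of the
bags over the connected components of `T − t`. -/
noncomputable def nodeWidth (M : Matroid α) (T : SimpleGraph β) (τ : β → Set α) (t : β) : ℤ :=
  (∑ᶠ c : (T.induce {s : β | s ≠ t}).ConnectedComponent,
      (M.mRank (τ t ∪ ⋃ (s : {s : β // s ≠ t})
        (_ : (T.induce {s : β | s ≠ t}).connectedComponentMk s ≠ c), τ s.1) : ℤ))
    - ((Nat.card (T.induce {s : β | s ≠ t}).ConnectedComponent : ℤ) - 1) * (M.mRk : ℤ)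

/-- The width of a tree-decomposition: the maximum node-width. -/
noncomputable def decompWidth (M : Matroid α) (T : SimpleGraph β) (τ : β → Set α) : ℤ :=
  sSup (Set.range (M.nodeWidth T τ))

/-- The tree-width of a matroid: the minimum width of a (finite) tree-decomposition. -/
noncomputable def treeWidth (M : Matroid α) : ℕ :=
  sInf {n : ℕ | ∃ (β : Type) (T : SimpleGraph β) (τ : β → Set α),
    Finite β ∧ M.IsTreeDecomp T τ ∧ ∀ t, M.nodeWidth T τ t ≤ (n : ℤ)}

end Matroid

namespace SimpleGraph

/-- A graph is chordal if every cycle with at least four edges has a chord: an edge of the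
graph joining two vertices of the cycle that is not an edge of the cycle. -/
def IsChordal {V : Type*} (G : SimpleGraph V) : Prop :=
  ∀ ⦃v : V⦄ (w : G.Walk v v), w.IsCycle → 4 ≤ w.length →
    ∃ x y, x ∈ w.support ∧ y ∈ w.support ∧ G.Adj x y ∧ s(x, y) ∉ w.edges

/-- A maximal clique of a graph. -/
def MaxClique {V : Type*} (G : SimpleGraph V) (C : Set V) : Prop :=
  G.IsClique C ∧ ∀ D, G.IsClique D → C ⊆ D → D = C

/-- The reduced clique graph of a graph: vertices are the maximal cliques; two maximal
cliques are adjacent if they intersect and every walk from one side to the other passes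
through their intersection. -/
def reducedCliqueGraph {V : Type*} (G : SimpleGraph V) :
    SimpleGraph {C : Set V // G.MaxClique C} where
  Adj C₁ C₂ := C₁ ≠ C₂ ∧ (C₁.1 ∩ C₂.1).Nonempty ∧
    ∀ u ∈ C₁.1 \ C₂.1, ∀ v ∈ C₂.1 \ C₁.1, ∀ p : G.Walk u v,
      ∃ z ∈ p.support, z ∈ C₁.1 ∩ C₂.1
  symm := ⟨by
    rintro a b ⟨hne, hint, hsep⟩
    refine ⟨hne.symm, by rwa [Set.inter_comm], fun u hu v hv p => ?_⟩
    obtain ⟨z, hz, hz2⟩ := hsep v hv u hu p.reverse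
    refine ⟨z, ?_, by rwa [Set.inter_comm]⟩
    simpa [SimpleGraph.Walk.support_reverse] using hz⟩
  loopless := ⟨fun a h => h.1 rfl⟩

end SimpleGraph

open Matroid

namespace Matroid

variable {α : Type*} {M : Matroid α} {H F G X Y I J : Set α} {c d e : α}

lemma closure_flat' (M : Matroid α) (X : Set α) : M.IsFlat (M.closure X) := by
  haveI : Nonempty {F : Set α // F ∈ {F | M.IsFlat F ∧ X ∩ M.E ⊆ F}} :=
    ⟨⟨M.E, ⟨M.ground_isFlat, inter_subset_right⟩⟩⟩
  rw [closure_def, sInter_eq_iInter]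
  exact IsFlat.iInter fun F => F.2.1

lemma flat_of_closure_subset (h : M.closure F ⊆ F) (hFE : F ⊆ M.E) : M.IsFlat F := by
  have h' : M.closure F = F := h.antisymm (M.subset_closure F hFE)
  exact h' ▸ M.closure_flat' F

lemma IsFlat.inter' (hF : M.IsFlat F) (hG : M.IsFlat G) : M.IsFlat (F ∩ G) := by
  refine flat_of_closure_subset (subset_inter ?_ ?_)
    (inter_subset_left.trans hF.subset_ground)
  · exact (M.closure_subset_closure inter_subset_left).trans hF.closure.subset
  · exact (M.closure_subset_closure inter_subset_right).trans hG.closure.subset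

lemma ncard_le_of_indep_subset [M.Finite] (hJ : M.Indep J) (hJX : J ⊆ X)
    (hI : M.IsBasis' I X) : J.ncard ≤ I.ncard := by
  obtain ⟨I', hI', hJI'⟩ := hJ.subset_isBasis'_of_subset hJX
  have h1 : I'.encard = I.encard := hI'.encard_eq_encard hI
  have h2 : J.ncard ≤ I'.ncard := ncard_le_ncard hJI' hI'.indep.finite
  have h3 : I'.ncard = I.ncard := by rw [ncard_def, h1, ← ncard_def]
  omega

lemma mRank_eq_ncard_of_basis' [M.Finite] (hI : M.IsBasis' I X) : M.mRank X = I.ncard := by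
  show sSup {n : ℕ | ∃ J, M.Indep J ∧ J ⊆ X ∧ J.ncard = n} = I.ncard
  have hub : ∀ n ∈ {n : ℕ | ∃ J, M.Indep J ∧ J ⊆ X ∧ J.ncard = n}, n ≤ I.ncard := by
    rintro n ⟨J, hJ, hJX, rfl⟩
    exact ncard_le_of_indep_subset hJ hJX hI
  have hmem : I.ncard ∈ {n : ℕ | ∃ J, M.Indep J ∧ J ⊆ X ∧ J.ncard = n} :=
    ⟨I, hI.indep, hI.subset, rfl⟩
  exact le_antisymm (csSup_le ⟨_, hmem⟩ hub) (le_csSup ⟨_, hub⟩ hmem)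

lemma mRank_eq_ncard_of_basis [M.Finite] (hI : M.IsBasis I X) : M.mRank X = I.ncard :=
  mRank_eq_ncard_of_basis' hI.isBasis'

lemma Indep.mRank_eq_ncard [M.Finite] (hI : M.Indep I) : M.mRank I = I.ncard :=
  mRank_eq_ncard_of_basis hI.isBasis_self

lemma mRank_closure_eq' (M : Matroid α) [M.Finite] (X : Set α) :
    M.mRank (M.closure X) = M.mRank X := by
  obtain ⟨I, hI⟩ := M.exists_isBasis' X
  rw [mRank_eq_ncard_of_basis' hI, mRank_eq_ncard_of_basis hI.isBasis_closure_right]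

lemma mRank_mono' [M.Finite] (h : X ⊆ Y) : M.mRank X ≤ M.mRank Y := by
  obtain ⟨I, hI⟩ := M.exists_isBasis' X
  obtain ⟨J, hJ⟩ := M.exists_isBasis' Y
  rw [mRank_eq_ncard_of_basis' hI, mRank_eq_ncard_of_basis' hJ]
  exact ncard_le_of_indep_subset hI.indep (hI.subset.trans h) hJ

lemma mRank_insert_eq [M.Finite] (he : e ∈ M.E) (heX : e ∉ M.closure X) (hX : X ⊆ M.E) :
    M.mRank (insert e X) = M.mRank X + 1 := by
  obtain ⟨I, hI⟩ := M.exists_isBasis X hX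
  have hcl : M.closure I = M.closure X := hI.closure_eq_closure
  have heI : e ∉ I := fun h => heX (M.subset_closure X hX (hI.subset h))
  have hind : M.Indep (insert e I) := by
    rw [hI.indep.insert_indep_iff_of_notMem heI, hcl]
    exact ⟨he, heX⟩
  have hbas : M.IsBasis (insert e I) (insert e X) := by
    rw [isBasis_iff_indep_subset_closure]
    refine ⟨hind, insert_subset_insert hI.subset, insert_subset
      (M.subset_closure _ hind.subset_ground (mem_insert e I)) ?_⟩
    exact hI.subset_closure.trans (M.closure_subset_closure (subset_insert e I))
  rw [mRank_eq_ncard_of_basis hI, mRank_eq_ncard_of_basis hbas,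
    ncard_insert_of_notMem heI hI.indep.finite]

lemma IsFlat.mRank_lt_of_ssubset' [M.Finite] (hF : M.IsFlat F) (hG : M.IsFlat G) (h : F ⊂ G) :
    M.mRank F < M.mRank G := by
  obtain ⟨e, heG, heF⟩ := exists_of_ssubset h
  have h1 : M.mRank (insert e F) = M.mRank F + 1 :=
    mRank_insert_eq (hG.subset_ground heG) (by rwa [hF.closure]) hF.subset_ground
  have h2 : M.mRank (insert e F) ≤ M.mRank G :=
    mRank_mono' (insert_subset heG h.subset)
  omega

lemma IsFlat.eq_of_subset_of_mRank_le [M.Finite] (hF : M.IsFlat F) (hG : M.IsFlat G)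
    (hsub : F ⊆ G) (hr : M.mRank G ≤ M.mRank F) : F = G := by
  by_contra hne
  have hlt := hF.mRank_lt_of_ssubset' hG ⟨hsub, fun h => hne (hsub.antisymm h)⟩
  omega

lemma mRank_empty' (M : Matroid α) [M.Finite] : M.mRank (∅ : Set α) = 0 := by
  rw [M.empty_indep.mRank_eq_ncard, ncard_empty]

lemma IsFlat.eq_closure_empty_of_mRank_eq_zero [M.Finite] (hF : M.IsFlat F)
    (h : M.mRank F = 0) : F = M.closure ∅ := by
  refine ((M.closure_flat' ∅).eq_of_subset_of_mRank_le hF ?_ ?_).symm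
  · rw [← hF.closure]
    exact M.closure_subset_closure (empty_subset F)
  · rw [h, mRank_closure_eq', mRank_empty']

lemma IsFlat.exists_nonloop_of_mRank_eq_one [M.Finite] (hF : M.IsFlat F)
    (h : M.mRank F = 1) : ∃ x ∈ F, x ∉ M.closure ∅ := by
  by_contra! hcon
  have hle : M.mRank F ≤ M.mRank (M.closure ∅) := mRank_mono' fun x hx => hcon x hx
  rw [h, mRank_closure_eq', mRank_empty'] at hle
  omega

/-- Auxiliary relation: `c` and `d` span a nonloop of `F`. -/
def MRel (M : Matroid α) (F : Set α) (c d : α) : Prop :=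
  ∃ z, z ∈ M.closure {c, d} ∧ z ∈ F ∧ z ∉ M.closure ∅

lemma MRel.symm (h : M.MRel F c d) : M.MRel F d c := by
  obtain ⟨z, hz1, hz2, hz3⟩ := h
  exact ⟨z, by rwa [Set.pair_comm d c], hz2, hz3⟩

end Matroid


/-- Let `H` be a modular hyperplane of `M` with complementary cocircuit `C* = E(M) − H`.
Then `cl C* ∩ H` is a round set of `M`. -/
theorem closure_cocircuit_inter_hyperplane_round {α : Type*} (M : Matroid α) [M.Finite]
    (H : Set α) (hH : M.IsHyperplane H) (hmod : M.IsModularFlat H) :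
    M.RoundSet (M.closure (M.E \ H) ∩ H) := by
  classical
  obtain ⟨hHflat, hHrk⟩ := hH
  obtain ⟨-, hmod⟩ := hmod
  have hrkE : M.mRank H + 1 = M.mRank M.E := hHrk
  have hHE : H ⊆ M.E := hHflat.subset_ground
  set C : Set α := M.E \ H with hCdef
  set P : Set α := M.closure C with hPdef
  set X : Set α := P ∩ H with hXdef
  have hCE : C ⊆ M.E := diff_subset
  have hPE : P ⊆ M.E := M.closure_subset_ground C
  have hXE : X ⊆ M.E := inter_subset_left.trans hPE
  have hPflat : M.IsFlat P := M.closure_flat' C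
  have hXflat : M.IsFlat X := hPflat.inter' hHflat
  have hXH : X ⊆ H := inter_subset_right
  -- the key consequence of modularity
  have f2 : ∀ G, M.IsFlat G → ∀ e, e ∈ G → e ∉ H → M.mRank G = M.mRank (G ∩ H) + 1 := by
    intro G hG e heG heH
    have heE : e ∈ M.E := hG.subset_ground heG
    have h1 : M.mRank (insert e H) = M.mRank H + 1 :=
      mRank_insert_eq heE (by rwa [hHflat.closure]) hHE
    have h2 : M.mRank (H ∪ G) = M.mRank M.E := by
      refine le_antisymm (mRank_mono' (union_subset hHE hG.subset_ground)) ?_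
      rw [← hrkE, ← h1]
      exact mRank_mono' (insert_subset (Or.inr heG) subset_union_left)
    have h3 := hmod G hG
    rw [h2, ← hrkE, inter_comm H G] at h3
    omega
  have hHP : H ∪ P = M.E := by
    refine subset_antisymm (union_subset hHE hPE) fun x hx => ?_
    by_cases hxH : x ∈ H
    · exact Or.inl hxH
    · exact Or.inr (M.subset_closure C hCE ⟨hx, hxH⟩)
  have hrP : M.mRank P = M.mRank X + 1 := by
    have h3 := hmod P hPflat
    rw [hHP, ← hrkE, inter_comm H P, ← hXdef] at h3
    omega
  refine ⟨hXE, fun F₁ F₂ hVC => ?_⟩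
  obtain ⟨⟨hF₁r, hF₁ne⟩, ⟨hF₂r, hF₂ne⟩, hun⟩ := hVC
  rw [restrict_ground_eq] at hF₁ne hF₂ne hun
  -- proper flats of the restriction are flats of `M` properly contained in `X`
  have flat_of : ∀ F, (M ↾ X).IsFlat F → M.IsFlat F ∧ F ⊆ X := by
    intro F hF
    have hFX : F ⊆ X := by simpa using hF.subset_ground
    have hFE : F ⊆ M.E := hFX.trans hXE
    have hcl : M.closure F ⊆ F := by
      intro e he
      have heX : e ∈ X := by
        rw [← hXflat.closure]
        exact M.closure_subset_closure hFX he
      obtain ⟨I, hI⟩ := M.exists_isBasis F hFE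
      have hIr : (M ↾ X).IsBasis I F := (isBasis_restrict_iff hXE).2 ⟨hI, hFX⟩
      have hIe : (M ↾ X).IsBasis I (insert e F) := by
        refine (isBasis_restrict_iff hXE).2 ⟨?_, insert_subset heX hFX⟩
        rw [isBasis_iff_indep_subset_closure]
        refine ⟨hI.indep, hI.subset.trans (subset_insert e F),
          insert_subset ?_ hI.subset_closure⟩
        rw [hI.closure_eq_closure]
        exact he
      exact hF.subset_of_isBasis_of_isBasis hIr hIe (mem_insert e F)
    exact ⟨flat_of_closure_subset hcl hFE, hFX⟩
  obtain ⟨hF₁flat, hF₁X⟩ := flat_of F₁ hF₁r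
  obtain ⟨hF₂flat, hF₂X⟩ := flat_of F₂ hF₂r
  have hb₁ : M.mRank F₁ < M.mRank X :=
    hF₁flat.mRank_lt_of_ssubset' hXflat ⟨hF₁X, fun h => hF₁ne (hF₁X.antisymm h)⟩
  have hb₂ : M.mRank F₂ < M.mRank X :=
    hF₂flat.mRank_lt_of_ssubset' hXflat ⟨hF₂X, fun h => hF₂ne (hF₂X.antisymm h)⟩
  obtain ⟨I, hI⟩ := M.exists_isBasis C hCE
  have hIP : M.closure I = P := hI.closure_eq_closure
  have hIE : I ⊆ M.E := hI.indep.subset_ground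
  have hInH : ∀ c ∈ I, c ∉ H := fun c hc => (hI.subset hc).2
  have hPC : M.mRank P = I.ncard := by
    rw [hPdef, mRank_closure_eq']
    exact mRank_eq_ncard_of_basis hI
  have hIcard : I.ncard = M.mRank X + 1 := by rw [← hPC]; exact hrP
  -- rank-one and rank-two facts about points and lines spanned by `I`
  have hnl : ∀ c ∈ I, M.mRank (M.closure {c}) = 1 := by
    intro c hc
    rw [mRank_closure_eq', (hI.indep.subset (singleton_subset_iff.2 hc)).mRank_eq_ncard,
      ncard_singleton]
  have hline : ∀ c ∈ I, ∀ d ∈ I, c ≠ d → M.mRank (M.closure {c, d}) = 2 := by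
    intro c hc d hd hcd
    have hsub : ({c, d} : Set α) ⊆ I := by
      rw [insert_subset_iff, singleton_subset_iff]
      exact ⟨hc, hd⟩
    rw [mRank_closure_eq', (hI.indep.subset hsub).mRank_eq_ncard, ncard_pair hcd]
  have hpt : ∀ c ∈ I, M.closure {c} ∩ H = M.closure ∅ := by
    intro c hc
    have hcE : c ∈ M.E := hIE hc
    have h2 := f2 (M.closure {c}) (M.closure_flat' {c}) c (M.mem_closure_self c hcE)
      (hInH c hc)
    rw [hnl c hc] at h2
    exact ((M.closure_flat' {c}).inter' hHflat).eq_closure_empty_of_mRank_eq_zero (by omega)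
  have hGlem : ∀ F, M.IsFlat F → F ⊆ H → ∀ c ∈ I,
      M.closure (insert c F) ∩ H = F ∧ M.mRank (M.closure (insert c F)) = M.mRank F + 1 := by
    intro F hF hFH c hc
    have hcE : c ∈ M.E := hIE hc
    have hins : insert c F ⊆ M.E := insert_subset hcE hF.subset_ground
    have hcF : c ∉ M.closure F := by
      rw [hF.closure]
      exact fun h => hInH c hc (hFH h)
    have hr : M.mRank (M.closure (insert c F)) = M.mRank F + 1 := by
      rw [mRank_closure_eq', mRank_insert_eq hcE hcF hF.subset_ground]
    have hGflat := M.closure_flat' (insert c F)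
    have hcG : c ∈ M.closure (insert c F) := M.subset_closure _ hins (mem_insert c F)
    have h2 := f2 _ hGflat c hcG (hInH c hc)
    rw [hr] at h2
    have hFsub : F ⊆ M.closure (insert c F) ∩ H :=
      subset_inter ((subset_insert c F).trans (M.subset_closure _ hins)) hFH
    have heq := hF.eq_of_subset_of_mRank_le (hGflat.inter' hHflat) hFsub (by omega)
    exact ⟨heq.symm, hr⟩
  have hexch : ∀ F, M.IsFlat F → F ⊆ H → ∀ c ∈ I, ∀ d, M.MRel F c d →
      d ∈ M.closure (insert c F) := by
    rintro F hF hFH c hc d ⟨z, hz1, hz2, hz3⟩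
    have hzc : z ∉ M.closure {c} := fun h => hz3 (by rw [← hpt c hc]; exact ⟨h, hFH hz2⟩)
    have hz1' : z ∈ M.closure (insert d {c}) := by rwa [Set.pair_comm c d] at hz1
    have hd := M.closure_exchange ⟨hz1', hzc⟩
    have hsub : insert z {c} ⊆ insert c F :=
      insert_subset (Or.inr hz2) (singleton_subset_iff.2 (mem_insert c F))
    exact M.closure_subset_closure hsub hd.1
  have hwit : ∀ F, M.IsFlat F → F ⊆ H → ∀ c ∈ I, ∀ e ∈ I, c ≠ e →
      M.closure {c, e} ⊆ M.closure (insert c F) → M.MRel F c e := by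
    intro F hF hFH c hc e he hce hsub
    have hKflat := (M.closure_flat' {c, e}).inter' hHflat
    have hcK : c ∈ M.closure {c, e} :=
      M.subset_closure _ (insert_subset (hIE hc) (singleton_subset_iff.2 (hIE he)))
        (mem_insert c {e})
    have h2 := f2 _ (M.closure_flat' {c, e}) c hcK (hInH c hc)
    rw [hline c hc e he hce] at h2
    obtain ⟨x, hx1, hx2⟩ := hKflat.exists_nonloop_of_mRank_eq_one (by omega)
    have hxF : x ∈ F := by
      rw [← (hGlem F hF hFH c hc).1]
      exact ⟨hsub hx1.1, hx1.2⟩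
    exact ⟨x, hx1.1, hxF, hx2⟩
  have htrans : ∀ F, M.IsFlat F → F ⊆ H → ∀ c ∈ I, ∀ d ∈ I, ∀ e ∈ I, c ≠ e →
      M.MRel F c d → M.MRel F d e → M.MRel F c e := by
    intro F hF hFH c hc d hd e he hce h1 h2
    have hins : insert c F ⊆ M.E := insert_subset (hIE hc) hF.subset_ground
    have hdG : d ∈ M.closure (insert c F) := hexch F hF hFH c hc d h1
    have heG : e ∈ M.closure (insert c F) := by
      have h3 : e ∈ M.closure (insert d F) := hexch F hF hFH d hd e h2
      have hsub : insert d F ⊆ M.closure (insert c F) :=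
        insert_subset hdG ((subset_insert c F).trans (M.subset_closure _ hins))
      exact ((M.closure_subset_closure hsub).trans (M.closure_closure _).subset) h3
    have hcG : c ∈ M.closure (insert c F) := M.subset_closure _ hins (mem_insert c F)
    have hsub2 : M.closure {c, e} ⊆ M.closure (insert c F) :=
      (M.closure_subset_closure (insert_subset hcG (singleton_subset_iff.2 heG))).trans
        (M.closure_closure _).subset
    exact hwit F hF hFH c hc e he hce hsub2
  have hXun : F₁ ∪ F₂ = X := hun
  have hcover : ∀ c ∈ I, ∀ d ∈ I, c ≠ d → M.MRel F₁ c d ∨ M.MRel F₂ c d := by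
    intro c hc d hd hcd
    have hKflat := (M.closure_flat' {c, d}).inter' hHflat
    have hcK : c ∈ M.closure {c, d} :=
      M.subset_closure _ (insert_subset (hIE hc) (singleton_subset_iff.2 (hIE hd)))
        (mem_insert c {d})
    have h2 := f2 _ (M.closure_flat' {c, d}) c hcK (hInH c hc)
    rw [hline c hc d hd hcd] at h2
    obtain ⟨x, hx1, hx2⟩ := hKflat.exists_nonloop_of_mRank_eq_one (by omega)
    have hxP : x ∈ P := by
      rw [← hIP]
      refine M.closure_subset_closure ?_ hx1.1
      rw [insert_subset_iff, singleton_subset_iff]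
      exact ⟨hc, hd⟩
    have hxX : x ∈ F₁ ∪ F₂ := by
      rw [hXun]
      exact ⟨hxP, hx1.2⟩
    rcases hxX with h | h
    · exact Or.inl ⟨x, hx1.1, h, hx2⟩
    · exact Or.inr ⟨x, hx1.1, h, hx2⟩
  have hfinal : ∀ F, M.IsFlat F → F ⊆ H → M.mRank F < M.mRank X →
      (∀ c ∈ I, ∀ d ∈ I, c ≠ d → M.MRel F c d) → False := by
    intro F hF hFH hFb hall
    obtain ⟨c₀, hc₀⟩ : I.Nonempty := nonempty_of_ncard_ne_zero (by omega)
    have hins : insert c₀ F ⊆ M.E := insert_subset (hIE hc₀) hF.subset_ground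
    have hIsub : I ⊆ M.closure (insert c₀ F) := by
      intro d hd
      by_cases hdc : d = c₀
      · subst hdc
        exact M.subset_closure _ hins (mem_insert d F)
      · exact hexch F hF hFH c₀ hc₀ d (hall c₀ hc₀ d hd (Ne.symm hdc))
    have hPsub : P ⊆ M.closure (insert c₀ F) := by
      rw [← hIP]
      exact (M.closure_subset_closure hIsub).trans (M.closure_closure _).subset
    have h5 : M.mRank P ≤ M.mRank F + 1 := by
      rw [← (hGlem F hF hFH c₀ hc₀).2]
      exact mRank_mono' hPsub
    omega
  by_cases hall1 : ∀ c ∈ I, ∀ d ∈ I, c ≠ d → M.MRel F₁ c d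
  · exact hfinal F₁ hF₁flat (hF₁X.trans hXH) hb₁ hall1
  push_neg at hall1
  obtain ⟨s, hs, t, ht, hst, hnst⟩ := hall1
  refine hfinal F₂ hF₂flat (hF₂X.trans hXH) hb₂ ?_
  have hst2 : M.MRel F₂ s t := (hcover s hs t ht hst).resolve_left hnst
  have hside : ∀ w ∈ I, w ≠ s → w ≠ t → M.MRel F₂ w s ∧ M.MRel F₂ w t := by
    intro w hw hws hwt
    have h1 : M.MRel F₂ w s ∨ M.MRel F₂ w t := by
      by_contra hcon
      push_neg at hcon
      have hA : M.MRel F₁ w s := (hcover w hw s hs hws).resolve_right hcon.1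
      have hB : M.MRel F₁ w t := (hcover w hw t ht hwt).resolve_right hcon.2
      exact hnst (htrans F₁ hF₁flat (hF₁X.trans hXH) s hs w hw t ht hst hA.symm hB)
    rcases h1 with h | h
    · exact ⟨h, htrans F₂ hF₂flat (hF₂X.trans hXH) w hw s hs t ht hwt h hst2⟩
    · exact ⟨htrans F₂ hF₂flat (hF₂X.trans hXH) w hw t ht s hs hws h hst2.symm, h⟩
  intro c hc d hd hcd
  by_cases hcs : c = s
  · subst hcs
    by_cases hdt : d = t
    · subst hdt; exact hst2
    · exact ((hside d hd (Ne.symm hcd) hdt).1).symm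
  by_cases hct : c = t
  · subst hct
    by_cases hds : d = s
    · subst hds; exact hst2.symm
    · exact ((hside d hd hds (Ne.symm hcd)).2).symm
  by_cases hds : d = s
  · subst hds; exact (hside c hc hcs hct).1
  by_cases hdt : d = t
  · subst hdt; exact (hside c hc hcs hct).2
  exact htrans F₂ hF₂flat (hF₂X.trans hXH) c hc s hs d hd hcd
    (hside c hc hcs hct).1 ((hside d hd hds hdt).1).symm
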